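/- Sampling probability asymptotics under strong positive selection with fixed sample size (equation (7b) of the paper): fix θ₁, θ₂ > 0 and natural numbers n₁, n₂ with n = n₁ + n₂. Define q(n₁,n₂;β) := C(n,n₁) · I(n₁,n₂,β) / I(0,0,β), where C(n,n₁) is the binomial coefficient and I(m₁,m₂,β) := ∫₀¹ x^{θ₁+m₁-1}(1-x)^{θ₂+m₂-1} e^{βx} dx. Then lim_{β → +∞} β^{n₂} · q(n₁,n₂;β) = C(n,n₁) · Γ(θ₂+n₂)/Γ(θ₂). -/

import Mathlib

open Real Filter Topology

open MeasureTheory Set intervalIntegral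

namespace SamplingAux

lemma rpow_bound {x : ℝ} (p : ℝ) (hx : 1/2 ≤ x) (hx1 : x ≤ 1) :
    x ^ p ≤ max 1 (2 ^ (-p)) := by
  rcases le_or_gt 0 p with hp | hp
  · exact le_max_of_le_left (Real.rpow_le_one (by linarith) hx1 hp)
  · refine le_max_of_le_right ?_
    have h2 : x ^ p ≤ (1/2 : ℝ) ^ p :=
      Real.rpow_le_rpow_of_nonpos (by norm_num) hx hp.le
    calc x ^ p ≤ (1/2 : ℝ) ^ p := h2
      _ = 2 ^ (-p) := by
          rw [Real.rpow_neg (by norm_num), ← Real.inv_rpow (by norm_num)]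
          norm_num

/-- integrand is measurable -/
lemma meas_f (a b β : ℝ) :
    Measurable (fun x : ℝ => x ^ (a-1) * (1-x) ^ (b-1) * Real.exp (β * x)) := by
  fun_prop

end SamplingAux

namespace SamplingAux

lemma int_piece1 (a b β : ℝ) (ha : 0 < a) (hb : 0 < b) :
    IntervalIntegrable (fun x : ℝ => x ^ (a-1) * (1-x) ^ (b-1) * Real.exp (β * x))
      volume 0 (1/2) := by
  rw [intervalIntegrable_iff_integrableOn_Ioc_of_le (by norm_num)]
  set C : ℝ := max 1 (2 ^ (-(b-1))) * Real.exp |β| with hC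
  have hgint : IntegrableOn (fun x : ℝ => x ^ (a-1) * C) (Ioc (0:ℝ) (1/2)) := by
    have := (intervalIntegrable_rpow' (a := 0) (b := 1/2) (r := a-1) (by linarith))
    rw [intervalIntegrable_iff_integrableOn_Ioc_of_le (by norm_num)] at this
    exact this.mul_const C
  refine hgint.integrable.mono' ((meas_f a b β).aestronglyMeasurable) ?_
  filter_upwards [ae_restrict_mem measurableSet_Ioc] with x hx
  obtain ⟨hx0, hx2⟩ := hx
  have h1 : (1-x) ^ (b-1) ≤ max 1 (2 ^ (-(b-1))) := rpow_bound _ (by linarith) (by linarith)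
  have h2 : Real.exp (β * x) ≤ Real.exp |β| := by
    apply Real.exp_le_exp.2
    calc β * x ≤ |β * x| := le_abs_self _
      _ = |β| * |x| := abs_mul _ _
      _ ≤ |β| * 1 := by
          apply mul_le_mul_of_nonneg_left _ (abs_nonneg β)
          rw [abs_of_nonneg hx0.le]; linarith
      _ = |β| := mul_one _
  have hx1 : (0:ℝ) ≤ x ^ (a-1) := Real.rpow_nonneg hx0.le _
  have hy1 : (0:ℝ) ≤ (1-x) ^ (b-1) := Real.rpow_nonneg (by linarith) _
  rw [Real.norm_eq_abs, abs_of_nonneg (by positivity)]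
  calc x ^ (a-1) * (1-x) ^ (b-1) * Real.exp (β * x)
      ≤ x ^ (a-1) * (max 1 (2 ^ (-(b-1)))) * Real.exp |β| := by
        apply mul_le_mul (mul_le_mul_of_nonneg_left h1 hx1) h2 (Real.exp_pos _).le
        positivity
    _ = x ^ (a-1) * C := by rw [hC]; ring

lemma int_piece2 (a b β : ℝ) (ha : 0 < a) (hb : 0 < b) :
    IntervalIntegrable (fun x : ℝ => x ^ (a-1) * (1-x) ^ (b-1) * Real.exp (β * x))
      volume (1/2) 1 := by
  rw [intervalIntegrable_iff_integrableOn_Ioc_of_le (by norm_num)]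
  set C : ℝ := max 1 (2 ^ (-(a-1))) * Real.exp |β| with hC
  have hgint : IntegrableOn (fun x : ℝ => (1-x) ^ (b-1) * C) (Ioc (1/2:ℝ) 1) := by
    have h0 := (intervalIntegrable_rpow' (a := 0) (b := 1/2) (r := b-1) (by linarith))
    have h1 : IntervalIntegrable (fun x : ℝ => (1-x) ^ (b-1)) volume (1-(1/2)) (1-0) := by
      have := (h0.comp_sub_left 1).symm
      simpa using this
    rw [show (1:ℝ)-(1/2) = 1/2 by norm_num, show (1:ℝ)-0 = 1 by norm_num] at h1
    rw [intervalIntegrable_iff_integrableOn_Ioc_of_le (by norm_num)] at h1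
    exact h1.mul_const C
  refine hgint.integrable.mono' ((meas_f a b β).aestronglyMeasurable) ?_
  filter_upwards [ae_restrict_mem measurableSet_Ioc] with x hx
  obtain ⟨hx0, hx2⟩ := hx
  have h1 : x ^ (a-1) ≤ max 1 (2 ^ (-(a-1))) := rpow_bound _ hx0.le hx2
  have h2 : Real.exp (β * x) ≤ Real.exp |β| := by
    apply Real.exp_le_exp.2
    calc β * x ≤ |β * x| := le_abs_self _
      _ = |β| * |x| := abs_mul _ _
      _ ≤ |β| * 1 := by
          apply mul_le_mul_of_nonneg_left _ (abs_nonneg β)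
          rw [abs_of_nonneg (by linarith)]; linarith
      _ = |β| := mul_one _
  have hy1 : (0:ℝ) ≤ (1-x) ^ (b-1) := Real.rpow_nonneg (by linarith) _
  have hx1 : (0:ℝ) ≤ x ^ (a-1) := Real.rpow_nonneg (by linarith) _
  rw [Real.norm_eq_abs, abs_of_nonneg (by positivity)]
  calc x ^ (a-1) * (1-x) ^ (b-1) * Real.exp (β * x)
      ≤ (max 1 (2 ^ (-(a-1)))) * (1-x) ^ (b-1) * Real.exp |β| := by
        apply mul_le_mul (mul_le_mul_of_nonneg_right h1 hy1) h2 (Real.exp_pos _).le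
        positivity
    _ = (1-x) ^ (b-1) * C := by rw [hC]; ring

end SamplingAux

namespace SamplingAux

lemma subst_id (a b β : ℝ) (hβ : 0 < β) :
    β ^ b * Real.exp (-β) *
      ∫ x in (1/2:ℝ)..1, x ^ (a-1) * (1-x) ^ (b-1) * Real.exp (β * x)
      = ∫ t in (0:ℝ)..(β/2), (1 - t/β) ^ (a-1) * t ^ (b-1) * Real.exp (-t) := by
  have hβ' : β ≠ 0 := hβ.ne'
  -- step 1: rewrite RHS integrand via congr on [0, β/2]
  have step1 : (∫ t in (0:ℝ)..(β/2), (1 - t/β) ^ (a-1) * t ^ (b-1) * Real.exp (-t))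
      = ∫ t in (0:ℝ)..(β/2),
          ((1 - t/β) ^ (a-1) * (t/β) ^ (b-1) * Real.exp (β * (1 - t/β)))
            * (β ^ (b-1) * Real.exp (-β)) := by
    apply intervalIntegral.integral_congr
    intro t ht
    rw [uIcc_of_le (by positivity)] at ht
    obtain ⟨ht0, ht2⟩ := ht
    have h1 : (t/β) ^ (b-1) * β ^ (b-1) = t ^ (b-1) := by
      rw [Real.div_rpow ht0 hβ.le, div_mul_cancel₀]
      exact (Real.rpow_pos_of_pos hβ _).ne'
    have h2 : Real.exp (β * (1 - t/β)) * Real.exp (-β) = Real.exp (-t) := by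
      rw [← Real.exp_add]
      congr 1
      field_simp
      ring
    calc (1 - t/β) ^ (a-1) * t ^ (b-1) * Real.exp (-t)
        = (1 - t/β) ^ (a-1) * ((t/β) ^ (b-1) * β ^ (b-1)) *
            (Real.exp (β * (1 - t/β)) * Real.exp (-β)) := by rw [h1, h2]
      _ = ((1 - t/β) ^ (a-1) * (t/β) ^ (b-1) * Real.exp (β * (1 - t/β)))
            * (β ^ (b-1) * Real.exp (-β)) := by ring
  rw [step1, intervalIntegral.integral_mul_const]
  -- step 2: substitution t/β
  have step2 : (∫ t in (0:ℝ)..(β/2),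
        (1 - t/β) ^ (a-1) * (t/β) ^ (b-1) * Real.exp (β * (1 - t/β)))
      = β • ∫ u in (0:ℝ)..(1/2), (1 - u) ^ (a-1) * u ^ (b-1) * Real.exp (β * (1 - u)) := by
    have := intervalIntegral.integral_comp_div (a := 0) (b := β/2)
      (f := fun u => (1 - u) ^ (a-1) * u ^ (b-1) * Real.exp (β * (1 - u))) hβ'
    rw [zero_div, div_div_cancel_left' ] at this
    · simpa using this
    · exact hβ'
  rw [step2]
  -- step 3: reflect u ↦ 1 - u
  have step3 : (∫ u in (0:ℝ)..(1/2), (1 - u) ^ (a-1) * u ^ (b-1) * Real.exp (β * (1 - u)))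
      = ∫ x in (1/2:ℝ)..1, x ^ (a-1) * (1-x) ^ (b-1) * Real.exp (β * x) := by
    have := intervalIntegral.integral_comp_sub_left (a := 0) (b := 1/2)
      (f := fun x => x ^ (a-1) * (1-x) ^ (b-1) * Real.exp (β * x)) 1
    rw [show (1:ℝ) - 1/2 = 1/2 by norm_num, show (1:ℝ) - 0 = 1 by norm_num] at this
    rw [← this]
    apply intervalIntegral.integral_congr
    intro u hu
    simp [sub_sub_cancel]
  rw [step3, smul_eq_mul]
  have hpow : β ^ b = β ^ (b-1) * β := by
    rw [← Real.rpow_add_one hβ' (b-1)]; ring_nf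
  rw [hpow]; ring

end SamplingAux

namespace SamplingAux

lemma tendsto_subst (a b : ℝ) (ha : 0 < a) (hb : 0 < b) :
    Tendsto (fun β : ℝ => ∫ t in (0:ℝ)..(β/2), (1 - t/β) ^ (a-1) * t ^ (b-1) * Real.exp (-t))
      atTop (𝓝 (Real.Gamma b)) := by
  rw [Real.Gamma_eq_integral hb]
  set φ : ℝ → ℝ → ℝ := fun β t => (1 - t/β) ^ (a-1) * t ^ (b-1) * Real.exp (-t) with hφ
  set F : ℝ → ℝ → ℝ := fun β => (Ioc (0:ℝ) (β/2)).indicator (φ β) with hF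
  set C : ℝ := max 1 (2 ^ (-(a-1))) with hCdef
  have hC0 : 0 < C := lt_max_of_lt_left one_pos
  have hmeasφ : ∀ β, Measurable (φ β) := by intro β; rw [hφ]; fun_prop
  have key : Tendsto (fun β : ℝ => ∫ t in Ioi (0:ℝ), F β t) atTop
      (𝓝 (∫ t in Ioi (0:ℝ), Real.exp (-t) * t ^ (b-1))) := by
    apply MeasureTheory.tendsto_integral_filter_of_dominated_convergence
      (bound := fun t => C * (Real.exp (-t) * t ^ (b-1)))
    · filter_upwards with β
      exact ((hmeasφ β).indicator measurableSet_Ioc).aestronglyMeasurable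
    · filter_upwards with β
      filter_upwards [ae_restrict_mem measurableSet_Ioi] with t ht
      show ‖(Ioc (0:ℝ) (β/2)).indicator (φ β) t‖ ≤ C * (Real.exp (-t) * t ^ (b-1))
      by_cases hmem : t ∈ Ioc (0:ℝ) (β/2)
      · rw [indicator_of_mem hmem]
        obtain ⟨ht0, ht2⟩ := hmem
        have hβpos : 0 < β := by
          by_contra h
          push_neg at h
          have : β/2 ≤ 0 := by linarith
          linarith
        have hhalf : 1/2 ≤ 1 - t/β := by
          rw [le_sub_comm]
          rw [div_le_iff₀ hβpos]
          linarith
        have h1 : (1 - t/β) ^ (a-1) ≤ C := by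
          rw [hCdef]
          apply rpow_bound _ hhalf
          have : 0 < t/β := div_pos ht0 hβpos
          linarith
        have hnn : 0 ≤ φ β t := by
          apply mul_nonneg (mul_nonneg (Real.rpow_nonneg (by linarith) _)
            (Real.rpow_nonneg ht0.le _)) (Real.exp_pos _).le
        rw [Real.norm_eq_abs, abs_of_nonneg hnn, hφ]
        calc (1 - t/β) ^ (a-1) * t ^ (b-1) * Real.exp (-t)
            ≤ C * t ^ (b-1) * Real.exp (-t) := by
              apply mul_le_mul_of_nonneg_right _ (Real.exp_pos _).le
              exact mul_le_mul_of_nonneg_right h1 (Real.rpow_nonneg ht0.le _)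
          _ = C * (Real.exp (-t) * t ^ (b-1)) := by ring
      · rw [indicator_of_notMem hmem, norm_zero]
        have : (0:ℝ) ≤ t ^ (b-1) := Real.rpow_nonneg (le_of_lt ht) _
        positivity
    · exact (Real.GammaIntegral_convergent hb).const_mul C
    · filter_upwards [ae_restrict_mem measurableSet_Ioi] with t ht
      have hev : ∀ᶠ β : ℝ in atTop, F β t = φ β t := by
        filter_upwards [eventually_ge_atTop (2*t)] with β hβ
        have : t ∈ Ioc (0:ℝ) (β/2) := ⟨ht, by linarith⟩
        rw [hF]; exact indicator_of_mem this _
      rw [show Real.exp (-t) * t ^ (b-1) = 1 ^ (a-1) * t ^ (b-1) * Real.exp (-t) by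
        rw [Real.one_rpow]; ring]
      apply Tendsto.congr' (by filter_upwards [hev] with β h using h.symm)
      apply Tendsto.mul_const
      apply Tendsto.mul_const
      have h1 : Tendsto (fun β : ℝ => 1 - t/β) atTop (𝓝 1) := by
        have := (tendsto_const_nhds (x := t) (f := atTop (α := ℝ))).div_atTop tendsto_id
        simpa using (tendsto_const_nhds (x := (1:ℝ))).sub this
      exact ((Real.continuousAt_rpow_const 1 (a-1) (Or.inl one_ne_zero)).tendsto.comp h1)
  apply key.congr'
  filter_upwards [eventually_gt_atTop (0:ℝ)] with β hβ
  rw [hF, MeasureTheory.integral_indicator measurableSet_Ioc,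
    Measure.restrict_restrict measurableSet_Ioc,
    inter_eq_left.mpr (Ioc_subset_Ioi_self),
    intervalIntegral.integral_of_le (by positivity)]

end SamplingAux

namespace SamplingAux

lemma tendsto_left_piece (a b : ℝ) (ha : 0 < a) (hb : 0 < b) :
    Tendsto (fun β : ℝ => β ^ b * Real.exp (-β) *
        ∫ x in (0:ℝ)..(1/2), x ^ (a-1) * (1-x) ^ (b-1) * Real.exp (β * x))
      atTop (𝓝 0) := by
  set K : ℝ := ∫ x in (0:ℝ)..(1/2), x ^ (a-1) * (1-x) ^ (b-1) with hK
  have hint0 : IntervalIntegrable (fun x : ℝ => x ^ (a-1) * (1-x) ^ (b-1)) volume 0 (1/2) := by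
    have := int_piece1 a b 0 ha hb
    apply this.congr
    intro x _
    simp
  apply squeeze_zero' (g := fun β => K * (β ^ b * Real.exp (-(1/2 * β))))
  · filter_upwards [eventually_ge_atTop (0:ℝ)] with β hβ
    have hI : 0 ≤ ∫ x in (0:ℝ)..(1/2), x ^ (a-1) * (1-x) ^ (b-1) * Real.exp (β * x) := by
      apply intervalIntegral.integral_nonneg (by norm_num)
      intro x hx
      have hx0 : 0 ≤ x := hx.1
      have hx1 : x ≤ 1/2 := hx.2
      have : (0:ℝ) ≤ (1-x) ^ (b-1) := Real.rpow_nonneg (by linarith) _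
      have : (0:ℝ) ≤ x ^ (a-1) := Real.rpow_nonneg hx0 _
      positivity
    have : 0 ≤ β ^ b := Real.rpow_nonneg hβ _
    positivity
  · filter_upwards [eventually_ge_atTop (0:ℝ)] with β hβ
    have hmono : (∫ x in (0:ℝ)..(1/2), x ^ (a-1) * (1-x) ^ (b-1) * Real.exp (β * x))
        ≤ ∫ x in (0:ℝ)..(1/2), (x ^ (a-1) * (1-x) ^ (b-1)) * Real.exp (β/2) := by
      apply intervalIntegral.integral_mono_on (by norm_num)
        (int_piece1 a b β ha hb) (hint0.mul_const _)
      intro x hx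
      obtain ⟨hx0, hx1⟩ := hx
      have h1 : Real.exp (β * x) ≤ Real.exp (β/2) := by
        apply Real.exp_le_exp.2
        nlinarith
      have h2 : (0:ℝ) ≤ x ^ (a-1) * (1-x) ^ (b-1) := by
        have : (0:ℝ) ≤ (1-x) ^ (b-1) := Real.rpow_nonneg (by linarith) _
        have : (0:ℝ) ≤ x ^ (a-1) := Real.rpow_nonneg hx0 _
        positivity
      exact mul_le_mul_of_nonneg_left h1 h2
    rw [intervalIntegral.integral_mul_const] at hmono
    have hKnn : 0 ≤ K := by
      rw [hK]
      apply intervalIntegral.integral_nonneg (by norm_num)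
      intro x hx
      have : (0:ℝ) ≤ (1-x) ^ (b-1) := Real.rpow_nonneg (by linarith [hx.2]) _
      have : (0:ℝ) ≤ x ^ (a-1) := Real.rpow_nonneg hx.1 _
      positivity
    have hfac : 0 ≤ β ^ b * Real.exp (-β) := by positivity
    calc β ^ b * Real.exp (-β) *
          ∫ x in (0:ℝ)..(1/2), x ^ (a-1) * (1-x) ^ (b-1) * Real.exp (β * x)
        ≤ β ^ b * Real.exp (-β) * (K * Real.exp (β/2)) :=
          mul_le_mul_of_nonneg_left hmono hfac
      _ = K * (β ^ b * Real.exp (-(1/2 * β))) := by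
          rw [show -(1/2 * β) = -β + β/2 by ring, Real.exp_add]
          ring
  · simpa using
      (tendsto_rpow_mul_exp_neg_mul_atTop_nhds_zero b (1/2) one_half_pos).const_mul K

lemma key_lemma (a b : ℝ) (ha : 0 < a) (hb : 0 < b) :
    Tendsto (fun β : ℝ => β ^ b * Real.exp (-β) *
        ∫ x in (0:ℝ)..1, x ^ (a-1) * (1-x) ^ (b-1) * Real.exp (β * x))
      atTop (𝓝 (Real.Gamma b)) := by
  have hsum := (tendsto_left_piece a b ha hb).add
    ((tendsto_subst a b ha hb).congr'
      (by filter_upwards [eventually_gt_atTop (0:ℝ)] with β hβ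
          exact (subst_id a b β hβ).symm))
  rw [zero_add] at hsum
  apply hsum.congr'
  filter_upwards [eventually_gt_atTop (0:ℝ)] with β hβ
  rw [← mul_add, ← intervalIntegral.integral_add_adjacent_intervals
    (int_piece1 a b β ha hb) (int_piece2 a b β ha hb)]

end SamplingAux

/-- Sampling probability asymptotics under strong positive selection with fixed
sample size (eq. (7b)): with
`q(n₁,n₂;β) = C(n,n₁)·I(n₁,n₂,β)/I(0,0,β)` where
`I(m₁,m₂,β) = ∫₀¹ x^{θ₁+m₁-1}(1-x)^{θ₂+m₂-1}e^{βx} dx`,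
one has `lim_{β→+∞} β^{n₂} q(n₁,n₂;β) = C(n,n₁)·Γ(θ₂+n₂)/Γ(θ₂)`. -/
theorem sampling_prob_strong_pos_selection (θ₁ θ₂ : ℝ) (hθ₁ : 0 < θ₁) (hθ₂ : 0 < θ₂)
    (n₁ n₂ : ℕ) :
    Filter.Tendsto (fun β : ℝ =>
        β ^ n₂ * ((Nat.choose (n₁ + n₂) n₁ : ℝ) *
          (∫ x in (0:ℝ)..1,
            x ^ (θ₁ + n₁ - 1) * (1 - x) ^ (θ₂ + n₂ - 1) * Real.exp (β * x)) /
          (∫ x in (0:ℝ)..1, x ^ (θ₁ - 1) * (1 - x) ^ (θ₂ - 1) * Real.exp (β * x))))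
      Filter.atTop
      (𝓝 ((Nat.choose (n₁ + n₂) n₁ : ℝ) * Real.Gamma (θ₂ + n₂) / Real.Gamma θ₂)) := by
  set c : ℝ := (Nat.choose (n₁ + n₂) n₁ : ℝ) with hc
  have ha1 : (0:ℝ) < θ₁ + n₁ := by positivity
  have hb1 : (0:ℝ) < θ₂ + n₂ := by positivity
  have h1 := SamplingAux.key_lemma (θ₁ + n₁) (θ₂ + n₂) ha1 hb1
  have h0 := SamplingAux.key_lemma θ₁ θ₂ hθ₁ hθ₂
  have hΓ : Real.Gamma θ₂ ≠ 0 := (Real.Gamma_pos_of_pos hθ₂).ne'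
  have hmain := (h1.const_mul c).div h0 hΓ
  apply hmain.congr'
  filter_upwards [eventually_gt_atTop (0:ℝ)] with β hβ
  set I₁ : ℝ := ∫ x in (0:ℝ)..1,
      x ^ (θ₁ + n₁ - 1) * (1 - x) ^ (θ₂ + n₂ - 1) * Real.exp (β * x) with hI₁
  set I₀ : ℝ := ∫ x in (0:ℝ)..1, x ^ (θ₁ - 1) * (1 - x) ^ (θ₂ - 1) * Real.exp (β * x) with hI₀
  have hbpow : β ^ (θ₂ + (n₂:ℝ)) = β ^ (n₂:ℕ) * β ^ θ₂ := by
    rw [← Real.rpow_natCast β n₂, ← Real.rpow_add hβ]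
    ring_nf
  have hcne : β ^ θ₂ * Real.exp (-β) ≠ 0 := by positivity
  show c * (β ^ (θ₂ + (n₂:ℝ)) * Real.exp (-β) * I₁) / (β ^ θ₂ * Real.exp (-β) * I₀)
      = β ^ (n₂:ℕ) * (c * I₁ / I₀)
  rw [hbpow]
  rw [show c * (β ^ (n₂:ℕ) * β ^ θ₂ * Real.exp (-β) * I₁)
      = (β ^ θ₂ * Real.exp (-β)) * (β ^ (n₂:ℕ) * c * I₁) by ring,
    show β ^ θ₂ * Real.exp (-β) * I₀ = (β ^ θ₂ * Real.exp (-β)) * I₀ by ring,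
    mul_div_mul_left _ _ hcne]
  ring
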